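/- Every normal spanning tree T of a connected graph G is end-faithful: for every end ω of G, T contains exactly one ray starting at the root of T that belongs to ω. -/

import Mathlib

namespace Paper

variable {V : Type*} {ι : Type*}

def edgeVerts (X : Set (Sym2 V)) : Set V := {v | ∃ e ∈ X, v ∈ e}

def ecompl (G : SimpleGraph V) (X : Set (Sym2 V)) : Set (Sym2 V) := G.edgeSet \ X

def bdry (G : SimpleGraph V) (X : Set (Sym2 V)) : Set V :=
  {v | (∃ e ∈ X, v ∈ e) ∧ ∃ e ∈ ecompl G X, v ∈ e}

def Nested (G : SimpleGraph V) (X Y : Set (Sym2 V)) : Prop :=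
  X ⊆ Y ∨ ecompl G X ⊆ Y ∨ Y ⊆ X ∨ Y ⊆ ecompl G X

def ReachOutside (G : SimpleGraph V) (S : Set V) (u v : V) : Prop :=
  ∃ p : G.Walk u v, ∀ x ∈ p.support, x ∉ S

def IsCompOutside (G : SimpleGraph V) (S : Set V) (C : Set V) : Prop :=
  ∃ v, v ∉ S ∧ C = {u | ReachOutside G S u v}

def sEdges (G : SimpleGraph V) (C : Set V) : Set (Sym2 V) :=
  {e | e ∈ G.edgeSet ∧ ∃ v ∈ C, v ∈ e}

def IsRay (G : SimpleGraph V) (f : ℕ → V) : Prop :=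
  Function.Injective f ∧ ∀ n, G.Adj (f n) (f (n + 1))

def RayEquiv (G : SimpleGraph V) (f g : ℕ → V) : Prop :=
  ∀ S : Set V, S.Finite → ∃ N, ∀ i ≥ N, ∀ j ≥ N, ReachOutside G S (f i) (g j)

def LivesIn (f : ℕ → V) (X : Set (Sym2 V)) : Prop :=
  ∃ N, ∀ n ≥ N, f n ∈ edgeVerts X

def Dominates (G : SimpleGraph V) (v : V) (f : ℕ → V) : Prop :=
  ∃ (g : ℕ → ℕ) (p : (k : ℕ) → G.Walk v (f (g k))),
    StrictMono g ∧ (∀ k, (p k).IsPath) ∧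
    ∀ k l, k ≠ l → ∀ x, x ∈ (p k).support → x ∈ (p l).support → x = v


/-- Tree order of a rooted spanning tree: `u ≤ v` iff `u` lies on the (unique)
path in `T` from the root `r` to `v`. -/
def TreeLE (T : SimpleGraph V) (r u v : V) : Prop :=
  ∀ p : T.Walk r v, p.IsPath → u ∈ p.support

open SimpleGraph Walk

section Aux

variable {T G : SimpleGraph V} {r u v w x y t c c' : V}

/-- The canonical path from `r` to `v` in a tree. -/
noncomputable def tpath (htree : T.IsTree) (r v : V) : T.Walk r v :=
  (htree.existsUnique_path r v).choose

lemma tpath_isPath (htree : T.IsTree) : (tpath htree r v).IsPath :=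
  (htree.existsUnique_path r v).choose_spec.1

lemma tpath_unique (htree : T.IsTree) (p : T.Walk r v) (hp : p.IsPath) :
    p = tpath htree r v :=
  (htree.existsUnique_path r v).choose_spec.2 p hp

lemma le_of_mem (htree : T.IsTree) {p : T.Walk r v} (hp : p.IsPath)
    (hu : u ∈ p.support) : TreeLE T r u v := by
  intro q hq
  rwa [tpath_unique htree q hq, ← tpath_unique htree p hp]

lemma treeLE_iff (htree : T.IsTree) : TreeLE T r u v ↔ u ∈ (tpath htree r v).support :=
  ⟨fun h => h _ (tpath_isPath htree), fun h => le_of_mem htree (tpath_isPath htree) h⟩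

lemma treeLE_refl : TreeLE T r v v := fun p _ => p.end_mem_support

lemma treeLE_root : TreeLE T r r v := fun p _ => p.start_mem_support

lemma treeLE_trans (hxu : TreeLE T r x u) (huv : TreeLE T r u v) : TreeLE T r x v := by
  classical
  intro p hp
  have hu := huv p hp
  exact p.support_takeUntil_subset hu (hxu (p.takeUntil u hu) (hp.takeUntil hu))

lemma treeLE_antisymm (htree : T.IsTree) (hxy : TreeLE T r x v) (hyx : TreeLE T r v x) :
    x = v := by
  classical
  set p := tpath htree r v with hp
  have hpp : p.IsPath := tpath_isPath htree
  have hx : x ∈ p.support := hxy p hpp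
  have hv : v ∈ (p.takeUntil x hx).support := hyx _ (hpp.takeUntil hx)
  have hspec := p.take_spec hx
  have hnodup : ((p.takeUntil x hx).support ++ (p.dropUntil x hx).support.tail).Nodup := by
    rw [← Walk.support_append, hspec]; exact hpp.support_nodup
  have hdisj := List.disjoint_of_nodup_append hnodup
  have hv2 : v ∈ (p.dropUntil x hx).support := Walk.end_mem_support _
  rw [Walk.support_eq_cons] at hv2
  rcases List.mem_cons.mp hv2 with h | h
  · exact h.symm
  · exact absurd h (hdisj hv)

lemma comparable_aux (htree : T.IsTree) {w : V} (p : T.Walk r w) (hp : p.IsPath)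
    (hx : x ∈ p.support) (hu : u ∈ p.support) :
    TreeLE T r x u ∨ TreeLE T r u x := by
  induction p using Walk.concatRec with
  | Hnil =>
    simp only [Walk.support_nil, List.mem_singleton] at hx hu
    subst hx; subst hu; left; exact fun p _ => p.end_mem_support
  | Hconcat q h ih =>
    rename_i a b _
    rw [Walk.support_concat, List.mem_append, List.mem_singleton] at hx hu
    have hq : q.IsPath := by
      rw [Walk.concat_eq_append] at hp; exact hp.of_append_left
    rcases hx with hx | rfl
    · rcases hu with hu | rfl
      · exact ih hq hx hu
      · left; exact le_of_mem htree hp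
          (by rw [Walk.support_concat]; exact List.mem_append_left _ hx)
    · rcases hu with hu | rfl
      · right; exact le_of_mem htree hp
          (by rw [Walk.support_concat]; exact List.mem_append_left _ hu)
      · left; exact fun p _ => p.end_mem_support

lemma below_comparable (htree : T.IsTree) (hxw : TreeLE T r x w) (huw : TreeLE T r u w) :
    TreeLE T r x u ∨ TreeLE T r u x :=
  comparable_aux htree (tpath htree r w) (tpath_isPath htree)
    ((treeLE_iff htree).mp hxw) ((treeLE_iff htree).mp huw)

/-- Key lemma: along any `G`-walk there is a vertex below both ends. -/
lemma exists_low (htree : T.IsTree)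
    (hnormal : ∀ u v : V, G.Adj u v → TreeLE T r u v ∨ TreeLE T r v u) :
    ∀ {u v : V} (p : G.Walk u v), ∃ z ∈ p.support, TreeLE T r z u ∧ TreeLE T r z v := by
  intro a0 b0 p
  induction p with
  | nil => exact ⟨_, Walk.start_mem_support _, treeLE_refl, treeLE_refl⟩
  | cons h q ih =>
    rename_i a b d
    obtain ⟨z, hz, hzb, hzd⟩ := ih
    rcases hnormal a b h with hab | hba
    · rcases below_comparable htree hzb hab with hza | haz
      · exact ⟨z, by simp [hz], hza, hzd⟩
      · exact ⟨a, Walk.start_mem_support _, treeLE_refl, treeLE_trans haz hzd⟩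
    · exact ⟨z, by simp [hz], treeLE_trans hzb hba, hzd⟩

/-- The unique path to a child is the path to the parent plus one edge. -/
lemma tpath_child (htree : T.IsTree) (hadj : T.Adj t c) (htc : TreeLE T r t c) :
    tpath htree r c = (tpath htree r t).concat hadj := by
  refine (tpath_unique htree _ ?_).symm
  have hcn : c ∉ (tpath htree r t).support := by
    intro hc
    exact hadj.ne' (treeLE_antisymm htree (le_of_mem htree (tpath_isPath htree) hc) htc)
  rw [Walk.isPath_def, Walk.support_concat]
  rw [List.nodup_append]
  exact ⟨(tpath_isPath htree).support_nodup, List.nodup_singleton _, by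
    intro a ha b hb; simp only [List.mem_singleton] at hb; subst hb; rintro rfl; exact hcn ha⟩

lemma child_eq (htree : T.IsTree) (hadj : T.Adj t c) (hadj' : T.Adj t c')
    (htc : TreeLE T r t c) (htc' : TreeLE T r t c')
    (hcomp : TreeLE T r c c' ∨ TreeLE T r c' c) : c = c' := by
  wlog hcc : TreeLE T r c c' generalizing c c'
  · exact (this hadj' hadj htc' htc hcomp.symm (hcomp.resolve_left hcc)).symm
  have hc : c ∈ (tpath htree r c').support := (treeLE_iff htree).mp hcc
  rw [tpath_child htree hadj' htc', Walk.support_concat,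
    List.mem_append, List.mem_singleton] at hc
  rcases hc with hc | rfl
  · exact absurd (treeLE_antisymm htree (le_of_mem htree (tpath_isPath htree) hc) htc)
      hadj.ne'
  · rfl

/-- Separation: anything below vertices above two distinct children is below the parent. -/
lemma below_parent (htree : T.IsTree) (hadj : T.Adj t c) (hadj' : T.Adj t c')
    (htc : TreeLE T r t c) (htc' : TreeLE T r t c') (hne : c ≠ c')
    (hcu : TreeLE T r c u) (hcv : TreeLE T r c' v)
    (hxu : TreeLE T r x u) (hxv : TreeLE T r x v) : TreeLE T r x t := by
  rcases below_comparable htree hxu hcu with hxc | hcx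
  · have hxnec : x ≠ c := by
      rintro rfl
      exact hne (child_eq htree hadj hadj' htc htc' (below_comparable htree hxv hcv))
    have hx : x ∈ (tpath htree r c).support := (treeLE_iff htree).mp hxc
    rw [tpath_child htree hadj htc, Walk.support_concat,
      List.mem_append, List.mem_singleton] at hx
    rcases hx with hx | rfl
    · exact le_of_mem htree (tpath_isPath htree) hx
    · exact absurd rfl hxnec
  · exact absurd (child_eq htree hadj hadj' htc htc'
      (below_comparable htree (treeLE_trans hcx hxv) hcv)) hne

lemma le_of_mem_dropUntil [DecidableEq V] (htree : T.IsTree) {p : T.Walk r v} (hp : p.IsPath)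
    (ht : t ∈ p.support) (hx : x ∈ (p.dropUntil t ht).support) : TreeLE T r t x := by
  set A := p.takeUntil t ht with hA
  set B := p.dropUntil t ht with hB
  set q := B.takeUntil x hx with hq
  have hBpath : B.IsPath := hp.dropUntil ht
  have hqpath : q.IsPath := hBpath.takeUntil hx
  have hApath : A.IsPath := hp.takeUntil ht
  have hpn : (A.support ++ B.support.tail).Nodup := by
    rw [← Walk.support_append, p.take_spec ht]; exact hp.support_nodup
  have hdisj := List.disjoint_of_nodup_append hpn
  have hsub : q.support.tail ⊆ B.support.tail := by
    intro z hz
    have hzq : z ∈ q.support := List.mem_of_mem_tail hz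
    have hzB : z ∈ B.support := B.support_takeUntil_subset hx hzq
    have hznet : z ≠ t := by
      intro h; subst h
      have := hqpath.support_nodup
      rw [Walk.support_eq_cons] at this
      exact (List.nodup_cons.mp this).1 hz
    rw [Walk.support_eq_cons] at hzB
    exact (List.mem_cons.mp hzB).resolve_left hznet
  have hpath : (A.append q).IsPath := by
    rw [Walk.isPath_def, Walk.support_append, List.nodup_append]
    exact ⟨hApath.support_nodup, q.support.tail_sublist.nodup hqpath.support_nodup,
      fun a ha b hb hab => by subst hab; exact hdisj ha (hsub hb)⟩
  exact le_of_mem htree hpath (by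
    rw [Walk.mem_support_append_iff]; exact Or.inl A.end_mem_support)

/-- Walk along a segment of a ray. -/
def raySeg {G : SimpleGraph V} {f : ℕ → V} (adj : ∀ n, G.Adj (f n) (f (n + 1))) (i : ℕ) :
    (k : ℕ) → G.Walk (f i) (f (i + k))
  | 0 => Walk.nil
  | k + 1 => (raySeg adj i k).concat (adj (i + k))

lemma raySeg_support {G : SimpleGraph V} {f : ℕ → V} (adj : ∀ n, G.Adj (f n) (f (n + 1)))
    (i k : ℕ) : (raySeg adj i k).support = (List.range (k + 1)).map (fun m => f (i + m)) := by
  induction k with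
  | zero => simp [raySeg, List.range_succ]
  | succ k ih =>
    rw [raySeg, Walk.support_concat, ih, List.range_succ (n := k + 1),
      List.map_append]
    rfl

lemma mem_raySeg {f : ℕ → V} {G : SimpleGraph V} (adj : ∀ n, G.Adj (f n) (f (n + 1))) (i k : ℕ)
    (hx : x ∈ (raySeg adj i k).support) : ∃ m, i ≤ m ∧ m ≤ i + k ∧ x = f m := by
  rw [raySeg_support] at hx
  simp only [List.mem_map, List.mem_range] at hx
  obtain ⟨m, hm, rfl⟩ := hx
  exact ⟨i + m, by omega, by omega, rfl⟩

lemma support_mapLe_eq {G T : SimpleGraph V} {u v : V} (hle : G ≤ T) (p : G.Walk u v) :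
    (p.mapLe hle).support = p.support := by
  exact Walk.support_mapLe_eq_support _ _

lemma exists_succ {T G : SimpleGraph V} {r : V} (htree : T.IsTree)
    (hnormal : ∀ u v : V, G.Adj u v → TreeLE T r u v ∨ TreeLE T r v u)
    {f : ℕ → V} (hf : IsRay G f) {t : V}
    (ht : ∃ N, ∀ n ≥ N, TreeLE T r t (f n)) :
    ∃ c, T.Adj t c ∧ TreeLE T r t c ∧ ∃ N, ∀ n ≥ N, TreeLE T r c (f n) := by
  classical
  obtain ⟨N₀, hN₀⟩ := ht
  obtain ⟨N₁, hN₁le, hN₁⟩ : ∃ N₁, N₀ ≤ N₁ ∧ ∀ n ≥ N₁, f n ≠ t := by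
    by_cases h : ∃ n, f n = t
    · refine ⟨max N₀ (h.choose + 1), le_max_left _ _, fun n hn hfn => ?_⟩
      have := hf.1 (hfn.trans h.choose_spec.symm)
      omega
    · exact ⟨N₀, le_refl _, fun n _ hfn => h ⟨n, hfn⟩⟩
  have hN₁' : ∀ n ≥ N₁, TreeLE T r t (f n) := fun n hn => hN₀ n (by omega)
  have hstep : ∀ n, N₁ ≤ n → ∃ c, T.Adj t c ∧ TreeLE T r t c ∧ TreeLE T r c (f n) := by
    intro n hn
    set p := tpath htree r (f n) with hp
    have htp : t ∈ p.support := (treeLE_iff htree).mp (hN₁' n hn)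
    have hne : t ≠ f n := fun h => hN₁ n hn h.symm
    obtain ⟨c, hadj, q, hq⟩ := Walk.exists_eq_cons_of_ne hne (p.dropUntil t htp)
    have hc : c ∈ (p.dropUntil t htp).support := by rw [hq]; simp
    exact ⟨c, hadj, le_of_mem_dropUntil htree (tpath_isPath htree) htp hc,
      le_of_mem htree (tpath_isPath htree) (p.support_dropUntil_subset htp hc)⟩
  have huniq : ∀ k c c', T.Adj t c → TreeLE T r t c → TreeLE T r c (f N₁) →
      T.Adj t c' → TreeLE T r t c' → TreeLE T r c' (f (N₁ + k)) → c = c' := by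
    intro k c c' hadj htc hcu hadj' htc' hcv
    by_contra hne
    obtain ⟨z, hz, hz1, hz2⟩ := exists_low htree hnormal (raySeg hf.2 N₁ k)
    have hzt : TreeLE T r z t := below_parent htree hadj hadj' htc htc' hne hcu hcv hz1 hz2
    obtain ⟨m, hm1, _, rfl⟩ := mem_raySeg hf.2 N₁ k hz
    exact hN₁ m hm1 (treeLE_antisymm htree hzt (hN₁' m hm1))
  obtain ⟨c, hadj, htc, hcf⟩ := hstep N₁ (le_refl _)
  refine ⟨c, hadj, htc, N₁, fun n hn => ?_⟩
  have key : ∀ k, TreeLE T r c (f (N₁ + k)) := by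
    intro k
    obtain ⟨c', hadj', htc', hcf'⟩ := hstep (N₁ + k) (by omega)
    rw [huniq k c c' hadj htc hcf hadj' htc' hcf']
    exact hcf'
  have := key (n - N₁)
  rwa [Nat.add_sub_cancel' hn] at this

end Aux

theorem stmt10 (G T : SimpleGraph V) (r : V)
    (hconn : G.Connected)
    (hle : T ≤ G) (htree : T.IsTree)
    (hnormal : ∀ u v : V, G.Adj u v → TreeLE T r u v ∨ TreeLE T r v u)
    (f : ℕ → V) (hf : IsRay G f) :
    ∃! g : ℕ → V, IsRay T g ∧ g 0 = r ∧ RayEquiv G f g := by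
  classical
  set EvB : V → Prop := fun t => ∃ N, ∀ n ≥ N, TreeLE T r t (f n) with hEvB
  have hsucc : ∀ t, EvB t → ∃ c, T.Adj t c ∧ TreeLE T r t c ∧ EvB c :=
    fun t ht => exists_succ htree hnormal hf ht
  choose! sc h1 h2 h3 using hsucc
  set g : ℕ → V := fun n => sc^[n] r with hg
  have hg0 : g 0 = r := rfl
  have hgs : ∀ n, g (n + 1) = sc (g n) := fun n => Function.iterate_succ_apply' sc n r
  have hEvBg : ∀ n, EvB (g n) := by
    intro n
    induction n with
    | zero => exact ⟨0, fun n _ => treeLE_root⟩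
    | succ n ih => rw [hgs]; exact h3 _ ih
  have hadjg : ∀ n, T.Adj (g n) (g (n + 1)) := fun n => (hgs n) ▸ h1 _ (hEvBg n)
  have hleg : ∀ n, TreeLE T r (g n) (g (n + 1)) := fun n => (hgs n) ▸ h2 _ (hEvBg n)
  have hmono : ∀ m n, m ≤ n → TreeLE T r (g m) (g n) := by
    intro m n hmn
    induction n with
    | zero => rw [Nat.le_zero] at hmn; subst hmn; exact treeLE_refl
    | succ n ih =>
      rcases Nat.lt_or_ge m (n + 1) with h | h
      · exact treeLE_trans (ih (by omega)) (hleg n)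
      · have : m = n + 1 := by omega
        subst this; exact treeLE_refl
  have hginj : Function.Injective g := by
    have key : ∀ m n, m < n → g m ≠ g n := by
      intro m n hmn heq
      have h1' : TreeLE T r (g (m + 1)) (g m) := by
        have := hmono (m + 1) n (by omega)
        rwa [← heq] at this
      exact (hadjg m).ne' (treeLE_antisymm htree h1' (hleg m))
    intro m n heq
    rcases lt_trichotomy m n with h | h | h
    · exact absurd heq (key m n h)
    · exact h
    · exact absurd heq.symm (key n m h)
  have hrequiv : RayEquiv G f g := by
    intro S hS
    have hfin : ∀ s : V, {j : ℕ | TreeLE T r (g j) s}.Finite := by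
      intro s
      have hsub : {j : ℕ | TreeLE T r (g j) s} ⊆ g ⁻¹' {x | x ∈ (tpath htree r s).support} :=
        fun j hj => (treeLE_iff htree).mp hj
      exact (((tpath htree r s).support.finite_toSet).preimage
        (hginj.injOn)).subset hsub
    have hBfin : (⋃ s ∈ S, {j : ℕ | TreeLE T r (g j) s}).Finite :=
      Set.Finite.biUnion hS (fun s _ => hfin s)
    obtain ⟨b, hb⟩ := hBfin.bddAbove
    obtain ⟨N₂, hN₂⟩ := hEvBg (b + 1)
    set N₁ := b + 1 with hN₁def
    have hN₁ : ∀ j ≥ N₁, ∀ s ∈ S, ¬ TreeLE T r (g j) s := by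
      intro j hj s hs hle'
      have : j ∈ ⋃ s ∈ S, {j : ℕ | TreeLE T r (g j) s} :=
        Set.mem_biUnion hs hle'
      have := hb this
      omega
    refine ⟨max N₁ N₂, fun i hi j hj => ?_⟩
    have htfi : TreeLE T r (g N₁) (f i) := hN₂ i (le_trans (le_max_right _ _) hi)
    set p := tpath htree r (f i) with hp
    have htp : g N₁ ∈ p.support := (treeLE_iff htree).mp htfi
    set B := p.dropUntil (g N₁) htp with hB
    have hw1mem : ∀ z ∈ B.support, TreeLE T r (g N₁) z :=
      fun z hz => le_of_mem_dropUntil htree (tpath_isPath htree) htp hz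
    have hjk : N₁ + (j - N₁) = j := by
      have : N₁ ≤ j := le_trans (le_max_left _ _) hj
      omega
    set W := (raySeg hadjg N₁ (j - N₁)).copy rfl (congrArg g hjk) with hW
    have hw2mem : ∀ z ∈ W.support, ∃ m, N₁ ≤ m ∧ z = g m := by
      intro z hz
      rw [hW, Walk.support_copy] at hz
      obtain ⟨m, hm1, _, rfl⟩ := mem_raySeg hadjg N₁ (j - N₁) hz
      exact ⟨m, hm1, rfl⟩
    refine ⟨((B.mapLe hle).reverse).append (W.mapLe hle), ?_⟩
    intro z hz hzS
    rw [Walk.mem_support_append_iff, Walk.support_reverse, List.mem_reverse,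
      support_mapLe_eq, support_mapLe_eq] at hz
    rcases hz with hz | hz
    · exact hN₁ N₁ (le_refl _) z hzS (hw1mem z hz)
    · obtain ⟨m, hm, rfl⟩ := hw2mem z hz
      exact hN₁ m hm _ hzS treeLE_refl
  refine ⟨g, ⟨⟨hginj, hadjg⟩, hg0, hrequiv⟩, ?_⟩
  rintro h ⟨⟨hhinj, hhadj⟩, hh0, hhequiv⟩
  have hHW : ∀ k, ∃ q : T.Walk r (h k), q.IsPath ∧ ∀ m ≤ k, h m ∈ q.support := by
    intro k
    have hk0 : (0 : ℕ) + k = k := by omega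
    refine ⟨(raySeg hhadj 0 k).copy hh0 (congrArg h hk0), ?_, ?_⟩
    · rw [Walk.isPath_def, Walk.support_copy, raySeg_support]
      refine List.Nodup.map ?_ List.nodup_range
      intro a b hab
      have := hhinj hab
      omega
    · intro m hm
      rw [Walk.support_copy, raySeg_support]
      simp only [List.mem_map, List.mem_range]
      exact ⟨m, by omega, by rw [Nat.zero_add]⟩
  have hlehn : ∀ m k, m ≤ k → TreeLE T r (h m) (h k) := by
    intro m k hmk
    obtain ⟨q, hq, hmem⟩ := hHW k
    exact le_of_mem htree hq (hmem m hmk)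
  have hEvBh : ∀ n, EvB (h n) := by
    intro n
    obtain ⟨N, hN⟩ := hhequiv {x | x ∈ (tpath htree r (h n)).support}
      ((tpath htree r (h n)).support.finite_toSet)
    refine ⟨N, fun m hm => ?_⟩
    obtain ⟨w, hw⟩ := hN m hm (max N n) (le_max_left _ _)
    obtain ⟨z, hz, hzf, hzh⟩ := exists_low htree hnormal w
    rcases below_comparable htree hzh (hlehn n (max N n) (le_max_right _ _)) with hzn | hnz
    · exact absurd ((treeLE_iff htree).mp hzn) (hw z hz)
    · exact treeLE_trans hnz hzf
  funext n
  induction n with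
  | zero => rw [hh0, hg0]
  | succ n ih =>
    have hadjh' : T.Adj (g n) (h (n + 1)) := ih ▸ hhadj n
    have hleh' : TreeLE T r (g n) (h (n + 1)) := ih ▸ hlehn n (n + 1) (by omega)
    obtain ⟨Na, hNa⟩ := hEvBh (n + 1)
    obtain ⟨Nb, hNb⟩ := hEvBg (n + 1)
    have hcomp : TreeLE T r (h (n + 1)) (g (n + 1)) ∨ TreeLE T r (g (n + 1)) (h (n + 1)) :=
      below_comparable htree (hNa (max Na Nb) (le_max_left _ _))
        (hNb (max Na Nb) (le_max_right _ _))
    exact child_eq htree hadjh' (hadjg n) hleh' (hleg n) hcomp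

end Paper
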